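/- Let R be a ring and (Q_n)_{n∈ι} a family of finitely generated projective left R-modules satisfying: (DISJ) for all n ≠ m, every R-linear map Q_n → Q_m is zero; and (GEN) every R-module M possessing a nonzero element admits a nonzero R-linear map Q_n → M for some n ∈ ι. Then for every R-module M, defining T_n(M) to be the submodule of M generated by the images of all R-linear maps Q_n → M (i.e. T_n(M) = ⨆_{f : Q_n →ₗ M} range f), the family of submodules (T_n(M))_{n∈ι} is independent (iSupIndep) and ⨆_{n∈ι} T_n(M) = M. -/

import Mathlib

universe u v w

open LinearMap
lemma trace_aux {R : Type u} [Ring R] {ι : Type v} (Q : ι → Type w)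
    [∀ n, AddCommGroup (Q n)] [∀ n, Module R (Q n)]
    [∀ n, Module.Finite R (Q n)] [∀ n, Module.Projective R (Q n)]
    (hdisj : ∀ n m : ι, n ≠ m → ∀ f : Q n →ₗ[R] Q m, f = 0)
    (M : Type w) [AddCommGroup M] [Module R M] (s : Set ι) (k : ι) (hk : k ∉ s)
    (g : Q k →ₗ[R] M)
    (hg : LinearMap.range g ≤ ⨆ m ∈ s, ⨆ f : Q m →ₗ[R] M, LinearMap.range f) :
    g = 0 := by
  classical
  -- reindex the double sup as a sup over a sigma type
  have hre : (⨆ m ∈ s, ⨆ f : Q m →ₗ[R] M, LinearMap.range f)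
      = ⨆ p : Σ m : s, (Q (m : ι) →ₗ[R] M), LinearMap.range p.2 := by
    rw [iSup_sigma, ← iSup_subtype'']
  rw [hre] at hg
  -- range g is a compact element
  have hfg : (LinearMap.range g).FG := by
    rw [LinearMap.range_eq_map]
    exact Submodule.FG.map g Module.Finite.fg_top
  obtain ⟨t, ht⟩ := CompleteLattice.IsCompactElement.exists_finset_of_le_iSup (Submodule R M)
    ((Submodule.fg_iff_compact _).mp hfg)
    (fun p : Σ m : s, (Q (m : ι) →ₗ[R] M) => LinearMap.range p.2) hg
  -- the big map from the finite product
  set P := (j : t) → Q ((j : Σ m : s, (Q (m : ι) →ₗ[R] M)).1 : ι) with hP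
  set F : P →ₗ[R] M := ∑ j : t, ((j : Σ m : s, (Q (m : ι) →ₗ[R] M)).2).comp
      (LinearMap.proj j) with hF
  have hrange : ∀ p ∈ t, LinearMap.range p.2 ≤ LinearMap.range F := by
    intro p hp x hx
    obtain ⟨y, rfl⟩ := hx
    refine ⟨Pi.single (⟨p, hp⟩ : t) y, ?_⟩
    rw [hF, LinearMap.sum_apply]
    rw [Finset.sum_eq_single (⟨p, hp⟩ : t)]
    · rw [LinearMap.comp_apply, LinearMap.proj_apply, Pi.single_eq_same]
    · intro j _ hj
      rw [LinearMap.comp_apply, LinearMap.proj_apply, Pi.single_eq_of_ne hj, map_zero]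
    · simp
  have hgF : LinearMap.range g ≤ LinearMap.range F := by
    refine ht.trans ?_
    exact iSup₂_le hrange
  -- lift g through F using projectivity of Q k
  obtain ⟨h, hh⟩ := Module.projective_lifting_property F.rangeRestrict
    (g.codRestrict (LinearMap.range F) (fun x => hgF ⟨x, rfl⟩))
    F.surjective_rangeRestrict
  have hzero : h = 0 := by
    have : ∀ j : t, (LinearMap.proj j).comp h = 0 := fun j =>
      hdisj k _ (fun e => hk (e ▸ (j : Σ m : s, (Q (m : ι) →ₗ[R] M)).1.2)) _
    ext x j
    exact (by simpa using LinearMap.congr_fun (this j) x : h x j = 0)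
  ext x
  have := congrFun (congrArg DFunLike.coe hh) x
  rw [hzero] at this
  simpa using congrArg Subtype.val this.symm

/-- The abstract decomposition principle of Appendix 2: let `(Q_n)_{n∈ι}` be a family of
finitely generated projective left `R`-modules such that (DISJ) every map `Q_n → Q_m` with
`n ≠ m` is zero and (GEN) every nonzero `R`-module receives a nonzero map from some `Q_n`.
Then, for every `R`-module `M`, the trace submodules
`T_n(M) = ⨆_{f : Q_n →ₗ[R] M} range f` form an independent family with supremum `M`. -/
theorem iSupIndep_trace_and_iSup_trace_eq_top
    {R : Type u} [Ring R] {ι : Type v} (Q : ι → Type w)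
    [∀ n, AddCommGroup (Q n)] [∀ n, Module R (Q n)]
    [∀ n, Module.Finite R (Q n)] [∀ n, Module.Projective R (Q n)]
    (hdisj : ∀ n m : ι, n ≠ m → ∀ f : Q n →ₗ[R] Q m, f = 0)
    (hgen : ∀ (M : Type w) [AddCommGroup M] [Module R M], (∃ x : M, x ≠ 0) →
      ∃ (n : ι) (f : Q n →ₗ[R] M), f ≠ 0)
    (M : Type w) [AddCommGroup M] [Module R M] :
    iSupIndep (fun n : ι => ⨆ f : Q n →ₗ[R] M, LinearMap.range f) ∧
      (⨆ n : ι, ⨆ f : Q n →ₗ[R] M, LinearMap.range f) = ⊤ := by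
    classical
  set T : ι → Submodule R M := fun n => ⨆ f : Q n →ₗ[R] M, LinearMap.range f with hTdef
  constructor
  · -- independence
    intro n
    rw [disjoint_iff]
    by_contra hne
    set N : Submodule R M := T n ⊓ ⨆ m, ⨆ _ : m ≠ n, T m with hN
    have hex : ∃ y : N, y ≠ 0 := by
      by_contra h
      push_neg at h
      exact hne ((Submodule.eq_bot_iff N).mpr fun x hx =>
        congrArg Subtype.val (h ⟨x, hx⟩))
    obtain ⟨k, f, hf⟩ := hgen N hex
    set g : Q k →ₗ[R] M := N.subtype.comp f with hgdef
    have hg0 : g = 0 → False := by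
      intro h0
      apply hf
      ext y
      have := LinearMap.congr_fun h0 y
      simpa [hgdef] using this
    have hrg1 : LinearMap.range g ≤ T n :=
      (LinearMap.range_comp_le_range f N.subtype).trans
        (by rw [Submodule.range_subtype]; exact inf_le_left)
    have hrg2 : LinearMap.range g ≤ ⨆ m, ⨆ _ : m ≠ n, T m :=
      (LinearMap.range_comp_le_range f N.subtype).trans
        (by rw [Submodule.range_subtype]; exact inf_le_right)
    by_cases hkn : k = n
    · subst hkn
      refine hg0 (trace_aux Q hdisj M {m | m ≠ k} k (by simp) g ?_)
      exact hrg2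
    · refine hg0 (trace_aux Q hdisj M {n} k (by simpa using hkn) g ?_)
      exact hrg1.trans (le_biSup T (Set.mem_singleton n))
  · -- supremum is top
    by_contra hne
    set S : Submodule R M := ⨆ n, T n with hS
    obtain ⟨x, hx⟩ : ∃ x : M, x ∉ S := by
      by_contra h
      push_neg at h
      exact hne (eq_top_iff.mpr fun y _ => h y)
    have hexq : ∃ y : M ⧸ S, y ≠ 0 :=
      ⟨Submodule.Quotient.mk x, fun h0 => hx ((Submodule.Quotient.mk_eq_zero S).mp h0)⟩
    obtain ⟨n, f, hf⟩ := hgen (M ⧸ S) hexq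
    obtain ⟨g, hg⟩ := Module.projective_lifting_property S.mkQ f S.mkQ_surjective
    apply hf
    ext y
    have hy : g y ∈ S :=
      le_iSup T n (le_iSup (fun f : Q n →ₗ[R] M => LinearMap.range f) g ⟨y, rfl⟩)
    rw [← hg]
    simpa using (Submodule.Quotient.mk_eq_zero S).mpr hy
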